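/- arXiv:1209.2760 — 4 statements merged into one kernel-verified Lean document; each statement's English description precedes it below -/
import Mathlib

section
/- For any prime p and any natural number n, the Chebyshev polynomial C_{p^n} is congruent to x^{p^n} modulo p, i.e., every coefficient of C_{p^n} − x^{p^n} in ℤ[x] is divisible by p. -/
open Polynomial

/-- Normalized Chebyshev polynomial of the first kind: `C 0 = 2`, `C 1 = X`,
`C (n+2) = X * C (n+1) - C n`. -/
noncomputable def chebC : ℕ → Polynomial ℤ
  | 0 => 2
  | 1 => X
  | n + 2 => X * chebC (n + 1) - chebC n

/-- Normalized Chebyshev polynomial of the second kind: `S 0 = 0`, `S 1 = 1`,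
`S (n+2) = X * S (n+1) - S n`. -/
noncomputable def chebS : ℕ → Polynomial ℤ
  | 0 => 0
  | 1 => 1
  | n + 2 => X * chebS (n + 1) - chebS n

lemma chebC_eq_dickson : ∀ n : ℕ, chebC n = Polynomial.dickson 1 1 n
  | 0 => by simp [chebC, Polynomial.dickson]; norm_num
  | 1 => by simp [chebC, Polynomial.dickson]
  | n + 2 => by
      rw [chebC, Polynomial.dickson_add_two, chebC_eq_dickson (n + 1), chebC_eq_dickson n]
      simp

lemma dickson_pow_zmod (p : ℕ) [Fact p.Prime] (n : ℕ) :
    Polynomial.dickson 1 (1 : ZMod p) (p ^ n) = X ^ (p ^ n) := by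
  induction n with
  | zero => simp [Polynomial.dickson_one]
  | succ n ih =>
      rw [pow_succ, Polynomial.dickson_one_one_mul, ih,
        Polynomial.dickson_one_one_zmod_p, X_pow_comp, ← pow_mul, mul_comm]

/-- For a prime `p`, every coefficient of `C_{p^n} - X^{p^n}` is divisible by `p`. -/
theorem chebC_prime_pow_congr (p : ℕ) (hp : p.Prime) (n : ℕ) :
    ∀ k : ℕ, (p : ℤ) ∣ (chebC (p ^ n) - X ^ (p ^ n)).coeff k := by
  haveI : Fact p.Prime := ⟨hp⟩
  intro k
  rw [← ZMod.intCast_zmod_eq_zero_iff_dvd]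
  have : Polynomial.map (Int.castRingHom (ZMod p)) (chebC (p ^ n) - X ^ (p ^ n)) = 0 := by
    rw [Polynomial.map_sub, Polynomial.map_pow, Polynomial.map_X, chebC_eq_dickson,
      Polynomial.map_dickson]
    simp [dickson_pow_zmod p n]
  have h := congrArg (fun q => Polynomial.coeff q k) this
  simpa using h
end

section
/- For any positive integer n, C_n(x) = Σ_{i ≤ n/2} (−1)^i · K(n−i, i) · x^{n−2i}, where K(n,m) = C(n,m) + C(n−1,m−1). -/
open Polynomial

/-- `K(n,m) = C(n,m) + C(n−1,m−1)`, where the second term vanishes when `m = 0`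
(corresponding to the binomial coefficient with lower index `−1`). -/
def chebK (n m : ℕ) : ℕ := n.choose m + if m = 0 then 0 else (n - 1).choose (m - 1)

lemma chebK_pascal (c b : ℕ) : chebK (c+2) (b+1) = chebK (c+1) (b+1) + chebK (c+1) b := by
  cases b with
  | zero => simp [chebK]
  | succ b => simp [chebK, Nat.choose_succ_succ]; omega

/-- Multiplying the sum form by `X`, with the range possibly extended by a zero term. -/
lemma xmul (n : ℕ) (hn : 1 ≤ n) :
    X * (∑ i ∈ Finset.range ((n+1)/2 + 1),
        Polynomial.C ((-1 : ℤ)^i * (chebK (n+1-i) i : ℤ)) * X^(n+1-2*i))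
    = ∑ i ∈ Finset.range (n/2 + 2),
        Polynomial.C ((-1 : ℤ)^i * (chebK (n+1-i) i : ℤ)) * X^(n+2-2*i) := by
  rw [Finset.mul_sum]
  have hterm : ∀ i ∈ Finset.range ((n+1)/2 + 1),
      X * (Polynomial.C ((-1 : ℤ)^i * (chebK (n+1-i) i : ℤ)) * X^(n+1-2*i))
      = Polynomial.C ((-1 : ℤ)^i * (chebK (n+1-i) i : ℤ)) * X^(n+2-2*i) := by
    intro i hi
    rw [Finset.mem_range] at hi
    have he : n+2-2*i = (n+1-2*i)+1 := by omega
    rw [he, pow_succ]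
    ring
  rw [Finset.sum_congr rfl hterm]
  rcases Nat.even_or_odd n with ⟨m, hm⟩ | ⟨m, hm⟩
  · -- n = 2m even: (n+1)/2+1 = m+1, extend to m+2 with zero last term
    subst hm
    have h1 : (m + m + 1)/2 + 1 = m + 1 := by omega
    have h2 : (m + m)/2 + 2 = m + 2 := by omega
    rw [h1, h2,
      Finset.sum_range_succ (fun i => Polynomial.C ((-1 : ℤ)^i * (chebK (m+m+1-i) i : ℤ)) * X^(m+m+2-2*i)) (m+1)]
    have hz : (chebK (m + m + 1 - (m+1)) (m+1) : ℤ) = 0 := by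
      have h3 : m + m + 1 - (m+1) = m := by omega
      have h4 : chebK m (m+1) = 0 := by
        have hm1 : 1 ≤ m := by omega
        simp only [chebK, if_neg (Nat.succ_ne_zero m)]
        rw [Nat.choose_eq_zero_of_lt (by omega), Nat.choose_eq_zero_of_lt (by omega)]
      rw [h3, h4]; simp
    rw [hz]
    simp
  · subst hm
    have h1 : (2*m + 1 + 1)/2 + 1 = m + 2 := by omega
    have h2 : (2*m + 1)/2 + 2 = m + 2 := by omega
    rw [h1, h2]

lemma key (n : ℕ) (hn : 1 ≤ n) :
    (∑ i ∈ Finset.range ((n+2)/2 + 1),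
        Polynomial.C ((-1 : ℤ)^i * (chebK (n+2-i) i : ℤ)) * X^(n+2-2*i))
    = X * (∑ i ∈ Finset.range ((n+1)/2 + 1),
        Polynomial.C ((-1 : ℤ)^i * (chebK (n+1-i) i : ℤ)) * X^(n+1-2*i))
      - ∑ i ∈ Finset.range (n/2 + 1),
        Polynomial.C ((-1 : ℤ)^i * (chebK (n-i) i : ℤ)) * X^(n-2*i) := by
  rw [xmul n hn]
  have hM : (n+2)/2 + 1 = (n/2 + 1) + 1 := by omega
  rw [hM]
  rw [Finset.sum_range_succ' (fun i => Polynomial.C ((-1 : ℤ)^i * (chebK (n+2-i) i : ℤ)) * X^(n+2-2*i)) (n/2+1)]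
  rw [show n/2 + 2 = (n/2 + 1) + 1 from rfl]
  rw [Finset.sum_range_succ' (fun i => Polynomial.C ((-1 : ℤ)^i * (chebK (n+1-i) i : ℤ)) * X^(n+2-2*i)) (n/2+1)]
  have h0 : (chebK (n+2) 0 : ℤ) = (chebK (n+1) 0 : ℤ) := by simp [chebK]
  simp only [pow_zero, one_mul, Nat.sub_zero, mul_zero, Nat.mul_zero]
  have hterm : ∀ i ∈ Finset.range (n/2 + 1),
      Polynomial.C ((-1 : ℤ)^(i+1) * (chebK (n+2-(i+1)) (i+1) : ℤ)) * X^(n+2-2*(i+1))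
      = Polynomial.C ((-1 : ℤ)^(i+1) * (chebK (n+1-(i+1)) (i+1) : ℤ)) * X^(n+2-2*(i+1))
        - Polynomial.C ((-1 : ℤ)^i * (chebK (n-i) i : ℤ)) * X^(n-2*i) := by
    intro i hi
    rw [Finset.mem_range] at hi
    have hi' : i ≤ n/2 := by omega
    have hexp : n+2-2*(i+1) = n-2*i := by omega
    obtain ⟨c, hc⟩ : ∃ c, n - i = c + 1 := ⟨n - i - 1, by omega⟩
    have e1 : n+2-(i+1) = c+2 := by omega
    have e2 : n+1-(i+1) = c+1 := by omega
    rw [hexp, e1, e2, ← sub_mul, ← Polynomial.C_sub]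
    congr 2
    have hp := chebK_pascal c i
    have e3 : n - i = c + 1 := hc
    rw [e3]
    push_cast [hp]
    ring
  rw [Finset.sum_congr rfl hterm, Finset.sum_sub_distrib]
  rw [h0]
  abel

/-- `C_n(x) = Σ_{i ≤ n/2} (−1)^i · K(n−i, i) · x^{n−2i}` for `n ≥ 1`. -/
theorem chebC_eq_sum (n : ℕ) (hn : 1 ≤ n) :
    chebC n
      = ∑ i ∈ Finset.range (n / 2 + 1),
          Polynomial.C ((-1 : ℤ) ^ i * (chebK (n - i) i : ℤ)) * X ^ (n - 2 * i) := by
  induction n using Nat.twoStepInduction with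
  | zero => exact absurd hn (by omega)
  | one =>
    simp [chebC, chebK, Finset.sum_range_succ]
  | more n ih1 ih2 =>
    rcases Nat.eq_zero_or_pos n with rfl | hn'
    · rw [show chebC 2 = X * chebC 1 - chebC 0 from rfl]
      simp [chebC, chebK, Finset.sum_range_succ]
      ring
    · rw [show chebC (n+2) = X * chebC (n+1) - chebC n from rfl,
        ih2 (by omega), ih1 hn']
      exact (key n hn').symm
end

section
/- For every natural number n, (x² − 4)·S_n(x)² = C_{2n}(x) − 2 as polynomials over ℤ (i.e., C_{2n}(x) − 2 factors as (x²−4) times a perfect square). -/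
open Polynomial

lemma chebC_add_two (k : ℕ) : chebC (k + 2) = X * chebC (k + 1) - chebC k := by
  simp [chebC]

lemma chebS_add_two (k : ℕ) : chebS (k + 2) = X * chebS (k + 1) - chebS k := by
  simp [chebS]

lemma chebS_pell (n : ℕ) :
    chebS (n + 1) ^ 2 - X * chebS (n + 1) * chebS n + chebS n ^ 2 = 1 := by
  induction n with
  | zero => simp [chebS]
  | succ n ih =>
    rw [chebS_add_two]
    linear_combination ih

/-- `(x² − 4)·S_n² = C_{2n} − 2`. -/
theorem chebC_two_mul_sub_two (n : ℕ) :
    (X ^ 2 - 4) * chebS n ^ 2 = chebC (2 * n) - 2 := by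
  induction n using Nat.twoStepInduction with
  | zero => simp [chebC, chebS]
  | one => simp [chebC, chebS]; ring
  | more n ih ih1 =>
    have h2 : 2 * (n + 2) = 2 * n + 2 + 2 := by ring
    have h1 : 2 * (n + 1) = 2 * n + 2 := by ring
    rw [h2, chebC_add_two, chebC_add_two, chebC_add_two, chebS_add_two]
    rw [h1] at ih1
    linear_combination ((X : Polynomial ℤ) ^ 2 - 2) * ih1 - ih
      + 2 * ((X : Polynomial ℤ) ^ 2 - 4) * chebS_pell n
      + ((X : Polynomial ℤ) ^ 2 - 2) * chebC_add_two (2 * n)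
end

section
/- For every natural number n ≥ 1, S_n(x) − S_n(y) = (x − y)·Σ_{i=1}^{n−1} S_i(x)·S_{n−i}(y), as an identity in ℤ[x,y]. -/
open Polynomial

open Finset in
lemma key_aux {R : Type*} [CommRing R] (x y : R) (a b : ℕ → R)
    (ha0 : a 0 = 0) (ha1 : a 1 = 1)
    (hb0 : b 0 = 0) (hb1 : b 1 = 1)
    (ha : ∀ n, a (n+2) = x * a (n+1) - a n)
    (hb : ∀ n, b (n+2) = y * b (n+1) - b n) :
    ∀ n, a n - b n = (x - y) * ∑ i ∈ Finset.range n, a i * b (n - i) := by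
  intro n
  induction n using Nat.twoStepInduction with
  | zero => simp [ha0, hb0]
  | one => simp [ha0, ha1, hb1]
  | more n ih ih1 =>
    have hsum : ∑ i ∈ Finset.range (n+2), a i * b (n+2-i)
        = y * (∑ i ∈ Finset.range (n+1), a i * b (n+1-i))
          - (∑ i ∈ Finset.range n, a i * b (n-i)) + a (n+1) := by
      rw [Finset.sum_range_succ]
      have h1 : ∀ i ∈ Finset.range (n+1), a i * b (n+2-i)
          = y * (a i * b (n+1-i)) - a i * b (n-i) := by
        intro i hi
        simp only [Finset.mem_range] at hi
        have e1 : n + 2 - i = (n - i) + 2 := by omega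
        have e2 : n + 1 - i = (n - i) + 1 := by omega
        rw [e1, e2, hb]
        ring
      have h2 : ∑ i ∈ Finset.range (n+1), a i * b (n - i)
          = ∑ i ∈ Finset.range n, a i * b (n-i) := by
        rw [Finset.sum_range_succ]
        simp [hb0]
      rw [Finset.sum_congr rfl h1, Finset.sum_sub_distrib, ← Finset.mul_sum, h2]
      simp [hb1]
    rw [hsum, ha, hb]
    linear_combination y * ih1 - ih

lemma aeval_chebS_rec {R : Type*} [CommRing R] (t : R) (n : ℕ) :
    Polynomial.aeval t (chebS (n+2)) = t * Polynomial.aeval t (chebS (n+1))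
      - Polynomial.aeval t (chebS n) := by
  simp [chebS]


open MvPolynomial in
/-- `S_n(x) − S_n(y) = (x − y)·Σ_{i=1}^{n−1} S_i(x)·S_{n−i}(y)` in `ℤ[x,y]`. -/
theorem chebS_sub_factor (n : ℕ) (hn : 1 ≤ n) :
    (Polynomial.aeval (MvPolynomial.X 0 : MvPolynomial (Fin 2) ℤ) (chebS n))
        - Polynomial.aeval (MvPolynomial.X 1 : MvPolynomial (Fin 2) ℤ) (chebS n)
      = (MvPolynomial.X 0 - MvPolynomial.X 1)
          * ∑ i ∈ Finset.Icc 1 (n - 1),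
              (Polynomial.aeval (MvPolynomial.X 0 : MvPolynomial (Fin 2) ℤ) (chebS i))
                * Polynomial.aeval (MvPolynomial.X 1 : MvPolynomial (Fin 2) ℤ) (chebS (n - i)) := by
  set a : ℕ → MvPolynomial (Fin 2) ℤ :=
    fun k => Polynomial.aeval (MvPolynomial.X 0 : MvPolynomial (Fin 2) ℤ) (chebS k) with hadef
  set b : ℕ → MvPolynomial (Fin 2) ℤ :=
    fun k => Polynomial.aeval (MvPolynomial.X 1 : MvPolynomial (Fin 2) ℤ) (chebS k) with hbdef
  have key := key_aux (MvPolynomial.X 0 : MvPolynomial (Fin 2) ℤ) (MvPolynomial.X 1) a b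
    (by simp [hadef, chebS]) (by simp [hadef, chebS])
    (by simp [hbdef, chebS]) (by simp [hbdef, chebS])
    (fun k => aeval_chebS_rec _ k) (fun k => aeval_chebS_rec _ k) n
  have hsum : ∑ i ∈ Finset.range n, a i * b (n - i)
      = ∑ i ∈ Finset.Icc 1 (n - 1), a i * b (n - i) := by
    rw [Finset.range_eq_Ico, Finset.sum_eq_sum_Ico_succ_bot hn]
    have : n = (n - 1) + 1 := by omega
    rw [this, Finset.Ico_add_one_right_eq_Icc]
    simp [hadef, chebS]
  rw [key, hsum]
end
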